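/- Let L be a finite-dimensional Lie algebra over ℂ with Killing radical K and centre Z(L), equipped with a ℤ-grading (L_i)_{i∈ℤ}. Fix i, j ∈ ℤ with i ≠ 0, j ≠ 0 and i + j ≠ 0, and assume: K ∩ L_{-i} = 0, K ∩ L_{-j} = 0, L_{i+j} ⊆ K, L_{-i-j} ⊆ K, and the reflexivity condition that any x ∈ L_{i+j} with ⁅x, L_{-i-j}⁆ = 0 is zero. Assume also ⁅L_{i+j}, L_{-i-j}⁆ ⊆ Z(L). Then ⁅L_i, L_{-i-j}⁆ = 0, ⁅L_j, L_{-i-j}⁆ = 0, and ⁅L_i, L_j⁆ = 0. -/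
import Mathlib


/-- The Killing radical of a Lie algebra over ℂ: the kernel of the Killing form,
`K = {x ∈ L | κ(x,y) = 0 for all y ∈ L}`. -/
def killingRad (L : Type*) [LieRing L] [LieAlgebra ℂ L] : Submodule ℂ L where
  carrier := {x : L | ∀ y : L, killingForm ℂ L x y = 0}
  add_mem' := by
    intro a b ha hb y
    rw [map_add, LinearMap.add_apply, ha y, hb y, add_zero]
  zero_mem' := by
    intro y
    rw [map_zero, LinearMap.zero_apply]
  smul_mem' := by
    intro c a ha y
    rw [map_smul, LinearMap.smul_apply, ha y, smul_zero]

/-- Let `i, j ≠ 0` with `i + j ≠ 0`, and suppose `L_{±i}` meet the Killing radical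
trivially while `L_{±(i+j)} ⊆ K`, with reflexivity and `⁅L_{i+j}, L_{-i-j}⁆ ⊆ Z(L)`.
Then `⁅L_i, L_{-i-j}⁆ = ⁅L_j, L_{-i-j}⁆ = ⁅L_i, L_j⁆ = 0`. -/
theorem statement17 (L : Type*) [LieRing L] [LieAlgebra ℂ L] [FiniteDimensional ℂ L]
    (Lg : ℤ → Submodule ℂ L)
    (hfin : {n : ℤ | Lg n ≠ ⊥}.Finite)
    (hdecomp : DirectSum.IsInternal Lg)
    (hbracket : ∀ m n : ℤ, ∀ x ∈ Lg m, ∀ y ∈ Lg n, ⁅x, y⁆ ∈ Lg (m + n))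
    (i j : ℤ) (hi : i ≠ 0) (hj : j ≠ 0) (hij : i + j ≠ 0)
    (hKi : killingRad L ⊓ Lg (-i) = ⊥)
    (hKj : killingRad L ⊓ Lg (-j) = ⊥)
    (hij1 : Lg (i + j) ≤ killingRad L)
    (hij2 : Lg (-(i + j)) ≤ killingRad L)
    (hrefl : ∀ x ∈ Lg (i + j), (∀ w ∈ Lg (-(i + j)), ⁅x, w⁆ = 0) → x = 0)
    (hZ : ∀ x ∈ Lg (i + j), ∀ w ∈ Lg (-(i + j)), ⁅x, w⁆ ∈ LieAlgebra.center ℂ L) :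
    (∀ x ∈ Lg i, ∀ w ∈ Lg (-(i + j)), ⁅x, w⁆ = 0) ∧
    (∀ y ∈ Lg j, ∀ w ∈ Lg (-(i + j)), ⁅y, w⁆ = 0) ∧
    (∀ x ∈ Lg i, ∀ y ∈ Lg j, ⁅x, y⁆ = 0) := by
  have key : ∀ m : ℤ, ∀ x ∈ Lg m, ∀ w ∈ Lg (-(i + j)), ⁅x, w⁆ ∈ killingRad L := by
    intro m x _ w hw y
    have hwK : w ∈ killingRad L := hij2 hw
    have : killingForm ℂ L ⁅w, x⁆ y = killingForm ℂ L w ⁅x, y⁆ :=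
      LieModule.traceForm_apply_lie_apply ℂ L L w x y
    rw [← lie_skew, map_neg, LinearMap.neg_apply, this, hwK ⁅x, y⁆, neg_zero]
  have h1 : ∀ x ∈ Lg i, ∀ w ∈ Lg (-(i + j)), ⁅x, w⁆ = 0 := by
    intro x hx w hw
    have hmem : ⁅x, w⁆ ∈ Lg (-j) := by
      have := hbracket i (-(i + j)) x hx w hw
      rwa [show i + -(i + j) = -j by ring] at this
    have : ⁅x, w⁆ ∈ killingRad L ⊓ Lg (-j) := ⟨key i x hx w hw, hmem⟩
    rwa [hKj, Submodule.mem_bot] at this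
  have h2 : ∀ y ∈ Lg j, ∀ w ∈ Lg (-(i + j)), ⁅y, w⁆ = 0 := by
    intro y hy w hw
    have hmem : ⁅y, w⁆ ∈ Lg (-i) := by
      have := hbracket j (-(i + j)) y hy w hw
      rwa [show j + -(i + j) = -i by ring] at this
    have : ⁅y, w⁆ ∈ killingRad L ⊓ Lg (-i) := ⟨key j y hy w hw, hmem⟩
    rwa [hKi, Submodule.mem_bot] at this
  refine ⟨h1, h2, ?_⟩
  intro x hx y hy
  refine hrefl ⁅x, y⁆ (hbracket i j x hx y hy) ?_
  intro w hw
  rw [lie_lie, h1 x hx w hw, h2 y hy w hw, lie_zero, lie_zero, sub_zero]
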